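/- Church numerals are not unitary higher-order maps: for every natural number n ≠ 1, the Church numeral n̄ = λf.λx.fⁿ x does not realize the type (♯𝔹⇒♯𝔹)⇒(♯𝔹⇒♯𝔹); that is, n̄ ⊮ (♯𝔹⇒♯𝔹)⇒(♯𝔹⇒♯𝔹). -/

import Mathlib

namespace LinAlg

/-! ### Syntax: pure values, pure terms, term distributions -/

mutual
inductive Val : Type where
  | var : ℕ → Val
  | lam : ℕ → Distr → Val
  | star : Val
  | pair : Val → Val → Val
  | inl : Val → Val
  | inr : Val → Val
inductive Term : Type where
  | val : Val → Term
  | app : Term → Term → Term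
  | seq : Term → Distr → Term
  | letp : ℕ → ℕ → Term → Distr → Term
  | matc : Term → ℕ → Distr → ℕ → Distr → Term
inductive Distr : Type where
  | zero : Distr
  | single : Term → Distr
  | add : Distr → Distr → Distr
  | smul : ℂ → Distr → Distr
end

noncomputable instance : DecidableEq Val := fun _ _ => Classical.dec _
noncomputable instance : DecidableEq Term := fun _ _ => Classical.dec _
noncomputable instance : DecidableEq Distr := fun _ _ => Classical.dec _

/-! ### The shallow congruence ≡ on term distributions -/

inductive Cong : Distr → Distr → Prop where
  | addZero (d : Distr) : Cong (d.add .zero) d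
  | oneSmul (d : Distr) : Cong (Distr.smul 1 d) d
  | smulSmul (a b : ℂ) (d : Distr) : Cong (Distr.smul a (Distr.smul b d)) (Distr.smul (a * b) d)
  | addComm (d₁ d₂ : Distr) : Cong (d₁.add d₂) (d₂.add d₁)
  | addAssoc (d₁ d₂ d₃ : Distr) : Cong ((d₁.add d₂).add d₃) (d₁.add (d₂.add d₃))
  | smulDistrib (a b : ℂ) (d : Distr) : Cong (Distr.smul (a + b) d) ((Distr.smul a d).add (Distr.smul b d))
  | smulAdd (a : ℂ) (d₁ d₂ : Distr) : Cong (Distr.smul a (d₁.add d₂)) ((Distr.smul a d₁).add (Distr.smul a d₂))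
  | refl (d : Distr) : Cong d d
  | symm {d₁ d₂ : Distr} : Cong d₁ d₂ → Cong d₂ d₁
  | trans {d₁ d₂ d₃ : Distr} : Cong d₁ d₂ → Cong d₂ d₃ → Cong d₁ d₃
  | addCongr {d₁ d₁' d₂ d₂' : Distr} : Cong d₁ d₁' → Cong d₂ d₂' → Cong (d₁.add d₂) (d₁'.add d₂')
  | smulCongr (a : ℂ) {d d' : Distr} : Cong d d' → Cong (Distr.smul a d) (Distr.smul a d')

/-! ### Free variables -/

mutual
def fvV : Val → Finset ℕ
  | .var y => {y}
  | .lam y b => fvD b \ {y}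
  | .star => ∅
  | .pair v₁ v₂ => fvV v₁ ∪ fvV v₂
  | .inl v => fvV v
  | .inr v => fvV v
def fvT : Term → Finset ℕ
  | .val v => fvV v
  | .app s t => fvT s ∪ fvT t
  | .seq t s => fvT t ∪ fvD s
  | .letp y z t s => fvT t ∪ (fvD s \ {y, z})
  | .matc t y s₁ z s₂ => fvT t ∪ (fvD s₁ \ {y}) ∪ (fvD s₂ \ {z})
def fvD : Distr → Finset ℕ
  | .zero => ∅
  | .single t => fvT t
  | .add d₁ d₂ => fvD d₁ ∪ fvD d₂
  | .smul _ d => fvD d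
end

/-! ### Pure substitution -/

mutual
def substV (x : ℕ) (w : Val) : Val → Val
  | .var y => if y = x then w else .var y
  | .lam y b => if y = x then .lam y b else .lam y (substD x w b)
  | .star => .star
  | .pair v₁ v₂ => .pair (substV x w v₁) (substV x w v₂)
  | .inl v => .inl (substV x w v)
  | .inr v => .inr (substV x w v)
def substT (x : ℕ) (w : Val) : Term → Term
  | .val v => .val (substV x w v)
  | .app s t => .app (substT x w s) (substT x w t)
  | .seq t s => .seq (substT x w t) (substD x w s)
  | .letp y z t s =>
      .letp y z (substT x w t) (if y = x ∨ z = x then s else substD x w s)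
  | .matc t y s₁ z s₂ =>
      .matc (substT x w t) y (if y = x then s₁ else substD x w s₁)
        z (if z = x then s₂ else substD x w s₂)
def substD (x : ℕ) (w : Val) : Distr → Distr
  | .zero => .zero
  | .single t => .single (substT x w t)
  | .add d₁ d₂ => .add (substD x w d₁) (substD x w d₂)
  | .smul a d => .smul a (substD x w d)
end

/-! ### Linear extensions of the syntactic constructs -/

def appTD (s : Term) : Distr → Distr
  | .zero => .zero
  | .single t => .single (.app s t)
  | .add d₁ d₂ => .add (appTD s d₁) (appTD s d₂)
  | .smul a d => .smul a (appTD s d)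

def appDV : Distr → Val → Distr
  | .zero, _ => .zero
  | .single t, v => .single (.app t (.val v))
  | .add d₁ d₂, v => .add (appDV d₁ v) (appDV d₂ v)
  | .smul a d, v => .smul a (appDV d v)

def seqD : Distr → Distr → Distr
  | .zero, _ => .zero
  | .single t, s => .single (.seq t s)
  | .add d₁ d₂, s => .add (seqD d₁ s) (seqD d₂ s)
  | .smul a d, s => .smul a (seqD d s)

def letpD (x y : ℕ) : Distr → Distr → Distr
  | .zero, _ => .zero
  | .single t, s => .single (.letp x y t s)
  | .add d₁ d₂, s => .add (letpD x y d₁ s) (letpD x y d₂ s)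
  | .smul a d, s => .smul a (letpD x y d s)

def matcD : Distr → ℕ → Distr → ℕ → Distr → Distr
  | .zero, _, _, _, _ => .zero
  | .single t, y, s₁, z, s₂ => .single (.matc t y s₁ z s₂)
  | .add d₁ d₂, y, s₁, z, s₂ => .add (matcD d₁ y s₁ z s₂) (matcD d₂ y s₁ z s₂)
  | .smul a d, y, s₁, z, s₂ => .smul a (matcD d y s₁ z s₂)

/-- Bilinear application of distributions:  (Σᵢ αᵢ·tᵢ)(Σⱼ βⱼ·sⱼ) = Σᵢⱼ αᵢβⱼ·(tᵢ sⱼ). -/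
def appD : Distr → Distr → Distr
  | .zero, _ => .zero
  | .single t, w => appTD t w
  | .add d₁ d₂, w => .add (appD d₁ w) (appD d₂ w)
  | .smul a d, w => .smul a (appD d w)

/-- Bilinear substitution  d⟨x := w⃗⟩ = Σⱼ βⱼ · d[x := wⱼ]  (recursion on the value
distribution w⃗; non-value summands are junk and are sent to 0⃗). -/
def bsubst (x : ℕ) (d : Distr) : Distr → Distr
  | .zero => .zero
  | .single (.val w) => substD x w d
  | .single _ => .zero
  | .add w₁ w₂ => .add (bsubst x d w₁) (bsubst x d w₂)
  | .smul a w => .smul a (bsubst x d w)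

/-! ### Evaluation -/

inductive Atom : Term → Distr → Prop where
  | beta (x : ℕ) (b : Distr) (v : Val) :
      Atom (.app (.val (.lam x b)) (.val v)) (substD x v b)
  | seqStar (s : Distr) : Atom (.seq (.val .star) s) s
  | letPair (x y : ℕ) (v w : Val) (s : Distr) :
      Atom (.letp x y (.val (.pair v w)) s) (substD y w (substD x v s))
  | matchInl (v : Val) (y : ℕ) (s₁ : Distr) (z : ℕ) (s₂ : Distr) :
      Atom (.matc (.val (.inl v)) y s₁ z s₂) (substD y v s₁)
  | matchInr (v : Val) (y : ℕ) (s₁ : Distr) (z : ℕ) (s₂ : Distr) :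
      Atom (.matc (.val (.inr v)) y s₁ z s₂) (substD z v s₂)
  | appR (s : Term) {t : Term} {d : Distr} : Atom t d → Atom (.app s t) (appTD s d)
  | appL (v : Val) {t : Term} {d : Distr} : Atom t d → Atom (.app t (.val v)) (appDV d v)
  | seqC (s : Distr) {t : Term} {d : Distr} : Atom t d → Atom (.seq t s) (seqD d s)
  | letC (x y : ℕ) (s : Distr) {t : Term} {d : Distr} :
      Atom t d → Atom (.letp x y t s) (letpD x y d s)
  | matcC (y : ℕ) (s₁ : Distr) (z : ℕ) (s₂ : Distr) {t : Term} {d : Distr} :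
      Atom t d → Atom (.matc t y s₁ z s₂) (matcD d y s₁ z s₂)

/-- One-step evaluation:  t⃗ ≻ t⃗′. -/
def Step (d d' : Distr) : Prop :=
  ∃ (a : ℂ) (s : Term) (s' r : Distr),
    Cong d (Distr.add (.smul a (.single s)) r) ∧
    Cong d' (Distr.add (.smul a s') r) ∧ Atom s s'

/-- Evaluation  t⃗ ≻≻ t⃗′:  reflexive-transitive closure of one-step evaluation. -/
def Eval : Distr → Distr → Prop := Relation.ReflTransGen Step

/-! ### Value distributions, inner product, norm -/

def IsValT : Term → Prop
  | .val _ => True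
  | _ => False

def IsValD : Distr → Prop
  | .zero => True
  | .single t => IsValT t
  | .add d₁ d₂ => IsValD d₁ ∧ IsValD d₂
  | .smul _ d => IsValD d

/-- The set of closed value distributions. -/
def ClosedValD : Set Distr := {d | IsValD d ∧ fvD d = ∅}

/-- Total coefficient of the pure term `t` in the distribution `d`. -/
noncomputable def coeff : Distr → Term → ℂ
  | .zero, _ => 0
  | .single s, t => if s = t then 1 else 0
  | .add d₁ d₂, t => coeff d₁ t + coeff d₂ t
  | .smul a d, t => a * coeff d t

/-- The domain of a distribution (all pure terms occurring in it, even with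
coefficient 0). -/
noncomputable def domD : Distr → Finset Term
  | .zero => ∅
  | .single t => {t}
  | .add d₁ d₂ => domD d₁ ∪ domD d₂
  | .smul _ d => domD d

/-- The inner product ⟨v⃗|w⃗⟩ on value distributions. -/
noncomputable def innerD (v w : Distr) : ℂ :=
  ∑ t ∈ domD v, (starRingEnd ℂ) (coeff v t) * coeff w t

/-- The pseudo-ℓ²-norm ‖v⃗‖. -/
noncomputable def normD (v : Distr) : ℝ := Real.sqrt (innerD v v).re

/-- The unit sphere S of closed value distributions of norm 1. -/
def Sphere : Set Distr := {d | d ∈ ClosedValD ∧ normD d = 1}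

/-- Span(X): weak linear combinations of elements of X (taken modulo ≡). -/
inductive Span (X : Set Distr) : Distr → Prop where
  | mem {d : Distr} : d ∈ X → Span X d
  | zero : Span X .zero
  | add {d₁ d₂ : Distr} : Span X d₁ → Span X d₂ → Span X (d₁.add d₂)
  | smul (a : ℂ) {d : Distr} : Span X d → Span X (Distr.smul a d)
  | congr {d d' : Distr} : Span X d → Cong d d' → Span X d'

/-! ### Realizability: unitary types -/

/-- t⃗ ⊩ A :  t⃗ evaluates to some vector of ⟦A⟧. -/
def Realizes (A : Set Distr) (t : Distr) : Prop := ∃ v ∈ A, Eval t v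

/-- |A| : the set of (closed) realizers of A. -/
def realizersOf (A : Set Distr) : Set Distr := {t | fvD t = ∅ ∧ Realizes A t}

/-! ### Type constructors -/

def UnitT : Set Distr := {Distr.single (.val .star)}

/-- ♭A : the basis of A. -/
def flatT (X : Set Distr) : Set Distr :=
  {e | ∃ d ∈ X, ∃ v : Val, (Term.val v) ∈ domD d ∧ e = Distr.single (.val v)}

/-- ♯A : the unitary span of A. -/
def sharpT (X : Set Distr) : Set Distr := {d | Span X d ∧ d ∈ Sphere}

/-- Linear extension of a value constructor. -/
def mapVD (f : Val → Val) : Distr → Distr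
  | .zero => .zero
  | .single (.val v) => .single (.val (f v))
  | .single t => .single t
  | .add d₁ d₂ => .add (mapVD f d₁) (mapVD f d₂)
  | .smul a d => .smul a (mapVD f d)

def inlD : Distr → Distr := mapVD Val.inl
def inrD : Distr → Distr := mapVD Val.inr

/-- Bilinear extension of pairing. -/
def pairD : Distr → Distr → Distr
  | .zero, _ => .zero
  | .single (.val v), w => mapVD (Val.pair v) w
  | .single t, _ => .single t
  | .add d₁ d₂, w => .add (pairD d₁ w) (pairD d₂ w)
  | .smul a d, w => .smul a (pairD d w)

/-- A + B (simple sum). -/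
def plusT (A B : Set Distr) : Set Distr :=
  {d | (∃ v ∈ A, d = inlD v) ∨ (∃ w ∈ B, d = inrD w)}

/-- A × B (simple product). -/
def timesT (A B : Set Distr) : Set Distr :=
  {d | ∃ v ∈ A, ∃ w ∈ B, d = pairD v w}

/-- A → B (pure arrow). -/
def arrowT (A B : Set Distr) : Set Distr :=
  {d | ∃ (x : ℕ) (b : Distr), d = Distr.single (.val (.lam x b)) ∧ fvD d = ∅ ∧
      ∀ v ∈ A, Realizes B (bsubst x b v)}

/-- Σᵢ αᵢ · λx.t⃗ᵢ  ↦  Σᵢ αᵢ · t⃗ᵢ  (strips the λx in front of each summand). -/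
def stripLam (x : ℕ) : Distr → Distr
  | .zero => .zero
  | .single (.val (.lam y b)) => if y = x then b else .single (.val (.lam y b))
  | .single t => .single t
  | .add d₁ d₂ => .add (stripLam x d₁) (stripLam x d₂)
  | .smul a d => .smul a (stripLam x d)

/-- A ⇒ B (unitary arrow). -/
def uarrowT (A B : Set Distr) : Set Distr :=
  {d | d ∈ Sphere ∧ ∃ x : ℕ,
      (∀ t ∈ domD d, ∃ b : Distr, t = Term.val (.lam x b)) ∧
      ∀ v ∈ A, Realizes B (bsubst x (stripLam x d) v)}

/-! ### Booleans -/

def ttD : Distr := .single (.val (.inl .star))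
def ffD : Distr := .single (.val (.inr .star))

/-- 𝔹 = 𝕌 + 𝕌. -/
def BoolT : Set Distr := plusT UnitT UnitT

/-- ♯𝔹, the type of unitary Booleans. -/
def sharpBool : Set Distr := sharpT BoolT

/-- Boolean projection π : Span({tt,ff}) → ℂ². -/
noncomputable def piB (d : Distr) : ℂ × ℂ :=
  (coeff d (.val (.inl .star)), coeff d (.val (.inr .star)))

/-- t⃗ represents the operator F : ℂ² → ℂ². -/
def Represents (td : Distr) (F : ℂ × ℂ → ℂ × ℂ) : Prop :=
  ∀ v, Span BoolT v → ∃ w, Span BoolT w ∧ Eval (appD td v) w ∧ piB w = F (piB v)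

/-- Hermitian inner product on ℂ². -/
def hinner (u v : ℂ × ℂ) : ℂ :=
  (starRingEnd ℂ) u.1 * v.1 + (starRingEnd ℂ) u.2 * v.2

/-- A unitary operator on ℂ². -/
def IsUnitaryOp (F : ℂ × ℂ → ℂ × ℂ) : Prop :=
  ∀ u v : ℂ × ℂ, hinner (F u) (F v) = hinner u v

/-! ### Typing contexts, substitutions, judgments -/

abbrev Ctx := List (ℕ × Set Distr)
abbrev Subst := List (ℕ × Distr)

/-- Applying a substitution, one bilinear substitution at a time. -/
def applySub : Distr → Subst → Distr
  | d, [] => d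
  | d, (x, w) :: σ => applySub (bsubst x d w) σ

/-- σ ∈ ⟦Γ⟧. -/
def SubMem (σ : Subst) (Γ : Ctx) : Prop :=
  List.Forall₂ (fun p q => p.1 = q.1 ∧ p.2 ∈ q.2) σ Γ

def ctxDom (Γ : Ctx) : Set ℕ := {x | ∃ A, (x, A) ∈ Γ}

/-- dom♯(Γ): the variables of Γ whose type is not a pure-value type. -/
def ctxDomSharp (Γ : Ctx) : Set ℕ := {x | ∃ A, (x, A) ∈ Γ ∧ flatT A ≠ A}

/-- All the types of the context are unitary types (subsets of the sphere). -/
def CtxUnitary (Γ : Ctx) : Prop := ∀ p ∈ Γ, p.2 ⊆ Sphere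

/-- Validity of the typing judgment  Γ ⊢ t⃗ : A. -/
def ValidJ (Γ : Ctx) (t : Distr) (A : Set Distr) : Prop :=
  ctxDomSharp Γ ⊆ (fvD t : Set ℕ) ∧ (fvD t : Set ℕ) ⊆ ctxDom Γ ∧
  ∀ σ : Subst, SubMem σ Γ → Realizes A (applySub t σ)

/-- Validity of the orthogonality judgment  Γ | Δ₁ ⊢ t⃗₁ ⊥ Δ₂ ⊢ t⃗₂ : A. -/
def OrthoJ (Γ Δ₁ Δ₂ : Ctx) (t₁ t₂ : Distr) (A : Set Distr) : Prop :=
  ValidJ (Γ ++ Δ₁) t₁ A ∧ ValidJ (Γ ++ Δ₂) t₂ A ∧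
  ∀ σ σ₁ σ₂ : Subst, SubMem σ Γ → SubMem σ₁ Δ₁ → SubMem σ₂ Δ₂ →
    ∀ v₁ v₂ : Distr, v₁ ∈ ClosedValD → v₂ ∈ ClosedValD →
      Eval (applySub t₁ (σ ++ σ₁)) v₁ → Eval (applySub t₂ (σ ++ σ₂)) v₂ →
      innerD v₁ v₂ = 0

end LinAlg

namespace LinAlg

/-- fⁿ x, with f the variable 0 and x the variable 1. -/
def iterApp : ℕ → Term
  | 0 => .val (.var 1)
  | n + 1 => .app (.val (.var 0)) (iterApp n)

/-- The Church numeral n̄ = λf.λx.fⁿ x. -/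
def church (n : ℕ) : Distr :=
  .single (.val (.lam 0 (.single (.val (.lam 1 (.single (iterApp n)))))))

/-! ### Auxiliary definitions -/

abbrev ttT : Term := .val (.inl .star)
abbrev ffT : Term := .val (.inr .star)

noncomputable def s2 : ℂ := ((Real.sqrt 2 : ℝ) : ℂ)
noncomputable def cc : ℂ := (((Real.sqrt 2)⁻¹ : ℝ) : ℂ)

noncomputable def b1 : Distr := .single (.matc (.val (.var 2)) 3 .zero 4 (.smul s2 ttD))
noncomputable def b2 : Distr := .single (.matc (.val (.var 2)) 3 (.smul s2 ffD) 4 .zero)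

noncomputable def w1 : Val := .lam 2 b1
noncomputable def w2 : Val := .lam 2 b2

noncomputable def fD : Distr := .add (.smul cc (.single (.val w1))) (.smul cc (.single (.val w2)))

/-! ### Cong invariance lemmas -/

lemma cong_domD {d e : Distr} (h : Cong d e) : domD d = domD e := by
  induction h with
  | addZero d => simp [domD]
  | oneSmul d => simp [domD]
  | smulSmul a b d => simp [domD]
  | addComm d₁ d₂ => exact Finset.union_comm _ _
  | addAssoc d₁ d₂ d₃ => exact Finset.union_assoc _ _ _
  | smulDistrib a b d => simp [domD]
  | smulAdd a d₁ d₂ => simp [domD]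
  | refl d => rfl
  | symm _ ih => exact ih.symm
  | trans _ _ ih₁ ih₂ => exact ih₁.trans ih₂
  | addCongr _ _ ih₁ ih₂ => simp [domD, ih₁, ih₂]
  | smulCongr a _ ih => exact ih

lemma cong_coeff {d e : Distr} (h : Cong d e) : ∀ t, coeff d t = coeff e t := by
  induction h <;> intro t <;> simp_all [coeff] <;> ring

lemma cong_isValD {d e : Distr} (h : Cong d e) : IsValD d ↔ IsValD e := by
  induction h <;> simp_all [IsValD] <;> tauto

lemma cong_fvD {d e : Distr} (h : Cong d e) : fvD d = fvD e := by
  induction h with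
  | addZero d => simp [fvD]
  | oneSmul d => simp [fvD]
  | smulSmul a b d => simp [fvD]
  | addComm d₁ d₂ => exact Finset.union_comm _ _
  | addAssoc d₁ d₂ d₃ => exact Finset.union_assoc _ _ _
  | smulDistrib a b d => simp [fvD]
  | smulAdd a d₁ d₂ => simp [fvD]
  | refl d => rfl
  | symm _ ih => exact ih.symm
  | trans _ _ ih₁ ih₂ => exact ih₁.trans ih₂
  | addCongr _ _ ih₁ ih₂ => simp [fvD, ih₁, ih₂]
  | smulCongr a _ ih => exact ih
/-! ### A semantic invariant -/

noncomputable def matOf (v : Val) : ℂ × ℂ → ℂ × ℂ :=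
  if v = w1 then fun p => (s2 * p.2, 0)
  else if v = w2 then fun p => (0, s2 * p.1)
  else fun _ => 0

mutual
noncomputable def phi : Term → ℂ × ℂ
  | .app (.val v) t => matOf v (phi t)
  | .matc (.val (.inl .star)) _ s₁ _ _ => phiD s₁
  | .matc (.val (.inr .star)) _ _ _ s₂ => phiD s₂
  | .val (.inl .star) => (1, 0)
  | .val (.inr .star) => (0, 1)
  | _ => 0
noncomputable def phiD : Distr → ℂ × ℂ
  | .zero => 0
  | .single t => phi t
  | .add d₁ d₂ => phiD d₁ + phiD d₂
  | .smul a d => a • phiD d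
end

lemma matOf_zero (v : Val) : matOf v 0 = 0 := by
  unfold matOf; split_ifs <;> simp

lemma matOf_add (v : Val) (p q : ℂ × ℂ) : matOf v (p + q) = matOf v p + matOf v q := by
  unfold matOf; split_ifs <;> simp [Prod.ext_iff] <;> ring

lemma matOf_smul (v : Val) (a : ℂ) (p : ℂ × ℂ) : matOf v (a • p) = a • matOf v p := by
  unfold matOf; split_ifs <;> simp [Prod.ext_iff, smul_eq_mul] <;> ring

lemma cong_phiD {d e : Distr} (h : Cong d e) : phiD d = phiD e := by
  induction h with
  | addZero d => simp [phiD]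
  | oneSmul d => simp [phiD]
  | smulSmul a b d => simp [phiD, smul_smul]
  | addComm d₁ d₂ => simp [phiD, add_comm]
  | addAssoc d₁ d₂ d₃ => simp [phiD, add_assoc]
  | smulDistrib a b d => simp [phiD, add_smul]
  | smulAdd a d₁ d₂ => simp [phiD, smul_add]
  | refl d => rfl
  | symm _ ih => exact ih.symm
  | trans _ _ ih₁ ih₂ => exact ih₁.trans ih₂
  | addCongr _ _ ih₁ ih₂ => simp [phiD, ih₁, ih₂]
  | smulCongr a _ ih => simp [phiD, ih]
/-! ### Step lemmas -/

lemma atom_not_val {v : Val} {d : Distr} (h : Atom (.val v) d) : False := by cases h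

lemma cong_single_self (s : Distr) : Cong s (.add (.smul 1 s) .zero) :=
  .trans (.symm (.addZero s)) (.addCongr (.symm (.oneSmul s)) (.refl _))

lemma step_single {s : Term} {d : Distr} (h : Atom s d) : Step (.single s) d :=
  ⟨1, s, d, .zero, cong_single_self _, cong_single_self _, h⟩

lemma step_smul {a : ℂ} {d d' : Distr} (h : Step d d') : Step (.smul a d) (.smul a d') := by
  obtain ⟨α, s, s', r, h₁, h₂, hat⟩ := h
  refine ⟨a * α, s, s', .smul a r, ?_, ?_, hat⟩
  · exact .trans (.smulCongr a h₁) (.trans (.smulAdd a _ _)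
      (.addCongr (.smulSmul a α _) (.refl _)))
  · exact .trans (.smulCongr a h₂) (.trans (.smulAdd a _ _)
      (.addCongr (.smulSmul a α _) (.refl _)))

lemma step_add_left {d d' e : Distr} (h : Step d d') : Step (.add d e) (.add d' e) := by
  obtain ⟨α, s, s', r, h₁, h₂, hat⟩ := h
  refine ⟨α, s, s', .add r e, ?_, ?_, hat⟩
  · exact .trans (.addCongr h₁ (.refl e)) (.addAssoc _ _ _)
  · exact .trans (.addCongr h₂ (.refl e)) (.addAssoc _ _ _)

lemma step_add_right {d e e' : Distr} (h : Step e e') : Step (.add d e) (.add d e') := by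
  obtain ⟨α, s, s', r, h₁, h₂, hat⟩ := h
  refine ⟨α, s, s', .add r d, ?_, ?_, hat⟩
  · exact .trans (.addComm d e) (.trans (.addCongr h₁ (.refl d)) (.addAssoc _ _ _))
  · exact .trans (.addComm d e') (.trans (.addCongr h₂ (.refl d)) (.addAssoc _ _ _))

lemma eval_smul {a : ℂ} {d d' : Distr} (h : Eval d d') : Eval (.smul a d) (.smul a d') := by
  induction h with
  | refl => exact .refl
  | tail _ hs ih => exact ih.tail (step_smul hs)

lemma eval_add {d d' e e' : Distr} (hd : Eval d d') (he : Eval e e') :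
    Eval (.add d e) (.add d' e') := by
  have h1 : Eval (.add d e) (.add d' e) := by
    induction hd with
    | refl => exact .refl
    | tail _ hs ih => exact ih.tail (step_add_left hs)
  refine h1.trans ?_
  induction he with
  | refl => exact .refl
  | tail _ hs ih => exact ih.tail (step_add_right hs)

/-- any step consumes a redex present in the domain -/
lemma step_redex {d d' : Distr} (h : Step d d') : ∃ s ∈ domD d, ∃ s', Atom s s' := by
  obtain ⟨α, s, s', r, h₁, _, hat⟩ := h
  refine ⟨s, ?_, s', hat⟩
  rw [cong_domD h₁]
  simp [domD]

lemma no_step_of_val_dom {d : Distr} (hval : ∀ t ∈ domD d, ∃ v, t = Term.val v)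
    {d' : Distr} (h : Step d d') : False := by
  obtain ⟨s, hs, s', hat⟩ := step_redex h
  obtain ⟨v, rfl⟩ := hval s hs
  exact atom_not_val hat

lemma eval_eq_of_val_dom {d V : Distr} (hval : ∀ t ∈ domD d, ∃ v, t = Term.val v)
    (h : Eval d V) : V = d := by
  rcases h.cases_head with h | ⟨b, hb, _⟩
  · exact h.symm
  · exact absurd hb (fun hb => no_step_of_val_dom hval hb)
/-! ### The cone of reachable terms -/

inductive Cone : Term → Prop where
  | tt : Cone ttT
  | ff : Cone ffT
  | m1tt : Cone (.matc ttT 3 .zero 4 (.smul s2 ttD))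
  | m1ff : Cone (.matc ffT 3 .zero 4 (.smul s2 ttD))
  | m2tt : Cone (.matc ttT 3 (.smul s2 ffD) 4 .zero)
  | m2ff : Cone (.matc ffT 3 (.smul s2 ffD) 4 .zero)
  | app1 {t : Term} : Cone t → Cone (.app (.val w1) t)
  | app2 {t : Term} : Cone t → Cone (.app (.val w2) t)

lemma domD_appTD {s : Term} : ∀ {d : Distr}, ∀ t ∈ domD (appTD s d), ∃ u ∈ domD d, t = .app s u
  | .zero => by simp [appTD, domD]
  | .single t => by simp [appTD, domD]
  | .add d₁ d₂ => by
      simp only [appTD, domD, Finset.mem_union]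
      rintro t (h | h)
      · obtain ⟨u, hu, rfl⟩ := domD_appTD t h; exact ⟨u, Or.inl hu, rfl⟩
      · obtain ⟨u, hu, rfl⟩ := domD_appTD t h; exact ⟨u, Or.inr hu, rfl⟩
  | .smul a d => by
      simp only [appTD, domD]
      exact domD_appTD

lemma phiD_appTD (v : Val) : ∀ (d : Distr), phiD (appTD (.val v) d) = matOf v (phiD d)
  | .zero => by simp [appTD, phiD, matOf_zero]
  | .single t => by simp [appTD, phiD, phi]
  | .add d₁ d₂ => by simp [appTD, phiD, phiD_appTD v d₁, phiD_appTD v d₂, matOf_add]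
  | .smul a d => by simp [appTD, phiD, phiD_appTD v d, matOf_smul]

lemma w1_ne_w2 : w1 ≠ w2 := by
  intro h
  simp [w1, w2, b1, b2] at h

lemma matOf_w1 (p : ℂ × ℂ) : matOf w1 p = (s2 * p.2, 0) := by simp [matOf]
lemma matOf_w2 (p : ℂ × ℂ) : matOf w2 p = (0, s2 * p.1) := by
  simp [matOf, w1_ne_w2.symm]

/-- Key lemma: atomic steps from cone terms stay in the cone and preserve phi. -/
lemma cone_atom {s : Term} (hc : Cone s) : ∀ {d : Distr}, Atom s d →
    (∀ t ∈ domD d, Cone t) ∧ phiD d = phi s := by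
  induction hc with
  | tt => intro d h; cases h
  | ff => intro d h; cases h
  | m1tt =>
      intro d h
      cases h with
      | matchInl => exact ⟨by simp [substD, domD], by simp [phi, phiD, substD]⟩
      | matcC _ _ _ _ h => exact absurd h atom_not_val
  | m1ff =>
      intro d h
      cases h with
      | matchInr =>
          constructor
          · simp only [substD, substT, substV, ttD, domD]
            intro t ht
            simp only [Finset.mem_singleton] at ht
            subst ht; exact Cone.tt
          · simp [phi, phiD, substD, substT, substV, ttD]
      | matcC _ _ _ _ h => exact absurd h atom_not_val
  | m2tt =>
      intro d h
      cases h with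
      | matchInl =>
          constructor
          · simp only [substD, substT, substV, ffD, domD]
            intro t ht
            simp only [Finset.mem_singleton] at ht
            subst ht; exact Cone.ff
          · simp [phi, phiD, substD, substT, substV, ffD]
      | matcC _ _ _ _ h => exact absurd h atom_not_val
  | m2ff =>
      intro d h
      cases h with
      | matchInr => exact ⟨by simp [substD, domD], by simp [phi, phiD, substD]⟩
      | matcC _ _ _ _ h => exact absurd h atom_not_val
  | @app1 t hct ih =>
      intro d h
      rw [show Term.val w1 = Term.val (.lam 2 b1) from rfl] at h
      cases h with
      | beta x b v =>
          cases hct with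
          | tt =>
              constructor
              · show ∀ t ∈ domD (substD 2 (.inl .star) b1), Cone t
                simp only [b1, substD, substT, substV, ttD, domD]
                intro t ht
                simp only [Finset.mem_singleton] at ht
                subst ht
                norm_num
                exact Cone.m1tt
              · show phiD (substD 2 (.inl .star) b1) = phi (.app (.val w1) ttT)
                simp [b1, substD, substT, substV, ttD, phi, phiD, matOf_w1]
                rfl
          | ff =>
              constructor
              · show ∀ t ∈ domD (substD 2 (.inr .star) b1), Cone t
                simp only [b1, substD, substT, substV, ttD, domD]
                intro t ht
                simp only [Finset.mem_singleton] at ht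
                subst ht
                norm_num
                exact Cone.m1ff
              · show phiD (substD 2 (.inr .star) b1) = phi (.app (.val w1) ffT)
                simp [b1, substD, substT, substV, ttD, phi, phiD, matOf_w1]
      | appR s h' =>
          constructor
          · intro u hu
            obtain ⟨u', hu', rfl⟩ := domD_appTD u hu
            exact Cone.app1 ((ih h').1 u' hu')
          · show phiD (appTD (.val w1) _) = phi (.app (.val w1) t)
            rw [phiD_appTD, (ih h').2]
            simp [phi]
      | appL v h' => exact absurd h' atom_not_val
  | @app2 t hct ih =>
      intro d h
      rw [show Term.val w2 = Term.val (.lam 2 b2) from rfl] at h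
      cases h with
      | beta x b v =>
          cases hct with
          | tt =>
              constructor
              · show ∀ t ∈ domD (substD 2 (.inl .star) b2), Cone t
                simp only [b2, substD, substT, substV, ffD, domD]
                intro t ht
                simp only [Finset.mem_singleton] at ht
                subst ht
                norm_num
                exact Cone.m2tt
              · show phiD (substD 2 (.inl .star) b2) = phi (.app (.val w2) ttT)
                simp [b2, substD, substT, substV, ffD, phi, phiD, matOf_w2]
          | ff =>
              constructor
              · show ∀ t ∈ domD (substD 2 (.inr .star) b2), Cone t
                simp only [b2, substD, substT, substV, ffD, domD]
                intro t ht
                simp only [Finset.mem_singleton] at ht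
                subst ht
                norm_num
                exact Cone.m2ff
              · show phiD (substD 2 (.inr .star) b2) = phi (.app (.val w2) ffT)
                simp [b2, substD, substT, substV, ffD, phi, phiD, matOf_w2]
                rfl
      | appR s h' =>
          constructor
          · intro u hu
            obtain ⟨u', hu', rfl⟩ := domD_appTD u hu
            exact Cone.app2 ((ih h').1 u' hu')
          · show phiD (appTD (.val w2) _) = phi (.app (.val w2) t)
            rw [phiD_appTD, (ih h').2]
            simp [phi]
      | appL v h' => exact absurd h' atom_not_val
/-! ### The invariant -/

def Inv (z : ℂ × ℂ) (d : Distr) : Prop := (∀ t ∈ domD d, Cone t) ∧ phiD d = z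

lemma step_inv {z : ℂ × ℂ} {d d' : Distr} (h : Step d d') (hi : Inv z d) : Inv z d' := by
  obtain ⟨α, s, s', r, h₁, h₂, hat⟩ := h
  obtain ⟨hc, hp⟩ := hi
  have hdom : domD d = {s} ∪ domD r := by
    rw [cong_domD h₁]; simp [domD]
  have hes : Cone s := hc s (by rw [hdom]; simp)
  have hkey := cone_atom hes hat
  constructor
  · intro t ht
    rw [cong_domD h₂] at ht
    simp only [domD, Finset.mem_union] at ht
    rcases ht with ht | ht
    · exact hkey.1 t ht
    · exact hc t (by rw [hdom]; simp [ht])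
  · have e1 : phiD d = α • phi s + phiD r := by
      rw [cong_phiD h₁]; simp [phiD]
    have e2 : phiD d' = α • phi s + phiD r := by
      rw [cong_phiD h₂]; simp [phiD, hkey.2]
    rw [e2, ← e1, hp]

lemma eval_inv {z : ℂ × ℂ} {d d' : Distr} (h : Eval d d') (hi : Inv z d) : Inv z d' := by
  induction h with
  | refl => exact hi
  | tail _ hs ih => exact step_inv hs ih

/-! ### coefficient lemmas -/

lemma coeff_eq_zero_of_not_mem : ∀ {d : Distr} {t : Term}, t ∉ domD d → coeff d t = 0
  | .zero, t, _ => rfl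
  | .single s, t, h => by
      simp only [domD, Finset.mem_singleton] at h
      have : ¬ (s = t) := fun he => h he.symm
      simp [coeff, this]
  | .add d₁ d₂, t, h => by
      simp only [domD, Finset.mem_union, not_or] at h
      simp [coeff, coeff_eq_zero_of_not_mem h.1, coeff_eq_zero_of_not_mem h.2]
  | .smul a d, t, h => by
      simp only [domD] at h
      simp [coeff, coeff_eq_zero_of_not_mem h]

lemma ttT_ne_ffT : ttT ≠ ffT := by simp

lemma innerD_self_of_pair {d : Distr} (h : domD d ⊆ {ttT, ffT}) :
    innerD d d = Complex.normSq (coeff d ttT) + Complex.normSq (coeff d ffT) := by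
  unfold innerD
  rw [Finset.sum_subset h]
  · rw [Finset.sum_pair ttT_ne_ffT]
    simp [Complex.normSq_eq_conj_mul_self]
  · intro t _ ht
    simp [coeff_eq_zero_of_not_mem ht]

lemma phiD_eq_coeff_of_pair : ∀ {d : Distr}, domD d ⊆ {ttT, ffT} →
    phiD d = (coeff d ttT, coeff d ffT)
  | .zero, _ => by simp [phiD, coeff]; rfl
  | .single t, h => by
      simp only [domD, Finset.singleton_subset_iff, Finset.mem_insert,
        Finset.mem_singleton] at h
      rcases h with rfl | rfl
      · simp [phiD, phi, coeff, ttT_ne_ffT]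
      · simp [phiD, phi, coeff, ttT_ne_ffT.symm]
  | .add d₁ d₂, h => by
      simp only [domD, Finset.union_subset_iff] at h
      simp [phiD, coeff, phiD_eq_coeff_of_pair h.1, phiD_eq_coeff_of_pair h.2,
        Prod.ext_iff]
  | .smul a d, h => by
      simp only [domD] at h
      simp [phiD, coeff, phiD_eq_coeff_of_pair h, Prod.ext_iff, smul_eq_mul]

/-! ### Span lemmas -/

lemma boolT_eq : BoolT = {ttD, ffD} := by
  ext d
  constructor
  · rintro (⟨v, hv, rfl⟩ | ⟨v, hv, rfl⟩)
    · rw [show v = Distr.single (.val .star) from hv]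
      left; rfl
    · rw [show v = Distr.single (.val .star) from hv]
      right; rfl
  · rintro (rfl | rfl)
    · exact Or.inl ⟨.single (.val .star), rfl, rfl⟩
    · exact Or.inr ⟨.single (.val .star), rfl, rfl⟩

lemma span_domD {v : Distr} (h : Span BoolT v) : domD v ⊆ {ttT, ffT} := by
  induction h with
  | mem hd =>
      rw [boolT_eq] at hd
      rcases hd with rfl | rfl <;> simp [ttD, ffD, domD]
  | zero => simp [domD]
  | add _ _ ih₁ ih₂ =>
      simp only [domD, Finset.union_subset_iff]; exact ⟨ih₁, ih₂⟩
  | smul a _ ih => exact ih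
  | congr _ hc ih => rwa [cong_domD hc] at ih
/-! ### fD is a realizer of ♯𝔹 ⇒ ♯𝔹 -/

lemma sqrt2_ne : Real.sqrt 2 ≠ 0 := by positivity

lemma cc_mul_s2 : cc * s2 = 1 := by
  rw [cc, s2, ← Complex.ofReal_mul, inv_mul_cancel₀ sqrt2_ne, Complex.ofReal_one]

lemma tt_mem_BoolT : ttD ∈ BoolT := by rw [boolT_eq]; left; rfl
lemma ff_mem_BoolT : ffD ∈ BoolT := by rw [boolT_eq]; right; rfl

noncomputable def Dstrip : Distr := .add (.smul cc b1) (.smul cc b2)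

noncomputable def Wtt : Distr := .add (.smul cc .zero) (.smul cc (.smul s2 ffD))
noncomputable def Wff : Distr := .add (.smul cc (.smul s2 ttD)) (.smul cc .zero)

lemma eval_leaf_tt : Eval (substD 2 (.inl .star) Dstrip) Wtt := by
  have e : substD 2 (.inl .star) Dstrip =
      .add (.smul cc (.single (.matc ttT 3 .zero 4 (.smul s2 ttD))))
           (.smul cc (.single (.matc ttT 3 (.smul s2 ffD) 4 .zero))) := by
    simp [Dstrip, b1, b2, substD, substT, substV, ttD, ffD]
  rw [e]
  have h1 : Step (Distr.add (.smul cc (.single (.matc ttT 3 .zero 4 (.smul s2 ttD))))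
        (.smul cc (.single (.matc ttT 3 (.smul s2 ffD) 4 .zero))))
      (Distr.add (.smul cc .zero)
        (.smul cc (.single (.matc ttT 3 (.smul s2 ffD) 4 .zero)))) :=
    step_add_left (step_smul (step_single (Atom.matchInl .star 3 .zero 4 (.smul s2 ttD))))
  have h2 : Step (Distr.add (.smul cc .zero)
        (.smul cc (.single (.matc ttT 3 (.smul s2 ffD) 4 .zero)))) Wtt := by
    have : Wtt = .add (.smul cc .zero) (.smul cc (substD 3 .star (.smul s2 ffD))) := by
      simp [Wtt, substD, substT, substV, ffD]
    rw [this]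
    exact step_add_right (step_smul (step_single
      (Atom.matchInl .star 3 (.smul s2 ffD) 4 .zero)))
  exact Relation.ReflTransGen.head h1 (Relation.ReflTransGen.head h2 .refl)

lemma eval_leaf_ff : Eval (substD 2 (.inr .star) Dstrip) Wff := by
  have e : substD 2 (.inr .star) Dstrip =
      .add (.smul cc (.single (.matc ffT 3 .zero 4 (.smul s2 ttD))))
           (.smul cc (.single (.matc ffT 3 (.smul s2 ffD) 4 .zero))) := by
    simp [Dstrip, b1, b2, substD, substT, substV, ttD, ffD]
  rw [e]
  have h1 : Step (Distr.add (.smul cc (.single (.matc ffT 3 .zero 4 (.smul s2 ttD))))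
        (.smul cc (.single (.matc ffT 3 (.smul s2 ffD) 4 .zero))))
      (Distr.add (.smul cc (substD 4 .star (.smul s2 ttD)))
        (.smul cc (.single (.matc ffT 3 (.smul s2 ffD) 4 .zero)))) :=
    step_add_left (step_smul (step_single (Atom.matchInr .star 3 .zero 4 (.smul s2 ttD))))
  have e2 : substD 4 .star (Distr.smul s2 ttD) = .smul s2 ttD := by
    simp [substD, substT, substV, ttD]
  rw [e2] at h1
  have h2 : Step (Distr.add (.smul cc (.smul s2 ttD))
        (.smul cc (.single (.matc ffT 3 (.smul s2 ffD) 4 .zero)))) Wff :=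
    step_add_right (step_smul (step_single
      (Atom.matchInr .star 3 (.smul s2 ffD) 4 .zero)))
  exact Relation.ReflTransGen.head h1 (Relation.ReflTransGen.head h2 .refl)

lemma pos_main : ∀ (v : Distr), (∀ t ∈ domD v, t = ttT ∨ t = ffT) →
    ∃ W, Eval (bsubst 2 Dstrip v) W ∧ domD W ⊆ {ttT, ffT} ∧ IsValD W ∧ fvD W = ∅ ∧
      coeff W ttT = coeff v ffT ∧ coeff W ffT = coeff v ttT ∧ Span BoolT W
  | .zero, _ => by
      refine ⟨.zero, .refl, by simp [bsubst, domD], trivial, rfl, by simp [coeff],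
        by simp [coeff], Span.zero⟩
  | .single t, h => by
      rcases h t (by simp [domD]) with rfl | rfl
      · refine ⟨Wtt, ?_, ?_, ?_, ?_, ?_, ?_, ?_⟩
        · show Eval (substD 2 (.inl .star) Dstrip) Wtt
          exact eval_leaf_tt
        · simp [Wtt, domD, ffD]
        · simp [Wtt, IsValD, ffD, IsValT]
        · simp [Wtt, fvD, fvT, fvV, ffD]
        · simp [Wtt, coeff, ffD]
        · simp [Wtt, coeff, ffD, mul_assoc, cc_mul_s2]
        · exact Span.add (Span.smul cc Span.zero)
            (Span.smul cc (Span.smul s2 (Span.mem ff_mem_BoolT)))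
      · refine ⟨Wff, ?_, ?_, ?_, ?_, ?_, ?_, ?_⟩
        · show Eval (substD 2 (.inr .star) Dstrip) Wff
          exact eval_leaf_ff
        · simp [Wff, domD, ttD]
        · simp [Wff, IsValD, ttD, IsValT]
        · simp [Wff, fvD, fvT, fvV, ttD]
        · simp [Wff, coeff, ttD, mul_assoc, cc_mul_s2]
        · simp [Wff, coeff, ttD]
        · exact Span.add (Span.smul cc (Span.smul s2 (Span.mem tt_mem_BoolT)))
            (Span.smul cc Span.zero)
  | .add v₁ v₂, h => by
      have h₁ : ∀ t ∈ domD v₁, t = ttT ∨ t = ffT := fun t ht =>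
        h t (by simp [domD, ht])
      have h₂ : ∀ t ∈ domD v₂, t = ttT ∨ t = ffT := fun t ht =>
        h t (by simp [domD, ht])
      obtain ⟨W₁, he₁, hd₁, hv₁, hf₁, hc₁, hc₁', hs₁⟩ := pos_main v₁ h₁
      obtain ⟨W₂, he₂, hd₂, hv₂, hf₂, hc₂, hc₂', hs₂⟩ := pos_main v₂ h₂
      refine ⟨.add W₁ W₂, ?_, ?_, ⟨hv₁, hv₂⟩, ?_, ?_, ?_, Span.add hs₁ hs₂⟩
      · show Eval (.add (bsubst 2 Dstrip v₁) (bsubst 2 Dstrip v₂)) _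
        exact eval_add he₁ he₂
      · simp only [domD, Finset.union_subset_iff]; exact ⟨hd₁, hd₂⟩
      · simp [fvD, hf₁, hf₂]
      · simp [coeff, hc₁, hc₂]
      · simp [coeff, hc₁', hc₂']
  | .smul a v, h => by
      obtain ⟨W, he, hd, hv, hf, hc, hc', hs⟩ := pos_main v h
      refine ⟨.smul a W, ?_, hd, hv, hf, ?_, ?_, Span.smul a hs⟩
      · show Eval (.smul a (bsubst 2 Dstrip v)) _
        exact eval_smul he
      · simp [coeff, hc]
      · simp [coeff, hc']
/-! ### norm facts -/

lemma normD_eq_one_iff {d : Distr} (h : domD d ⊆ {ttT, ffT}) :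
    normD d = 1 ↔ Complex.normSq (coeff d ttT) + Complex.normSq (coeff d ffT) = 1 := by
  rw [normD, innerD_self_of_pair h]
  have hre : ((Complex.normSq (coeff d ttT) : ℂ) + (Complex.normSq (coeff d ffT) : ℂ)).re
      = Complex.normSq (coeff d ttT) + Complex.normSq (coeff d ffT) := by
    simp
  rw [hre]
  constructor
  · intro h1
    have := Real.sqrt_eq_one.mp h1
    linarith
  · intro h1; rw [h1]; exact Real.sqrt_one

lemma tt_mem_sharpBool : ttD ∈ sharpBool := by
  refine ⟨Span.mem tt_mem_BoolT, ⟨⟨trivial, rfl⟩, ?_⟩⟩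
  rw [normD_eq_one_iff (by simp [ttD, domD])]
  simp [ttD, coeff, ttT_ne_ffT]

lemma f_mem : fD ∈ uarrowT sharpBool sharpBool := by
  refine ⟨⟨⟨?_, ?_⟩, ?_⟩, 2, ?_, ?_⟩
  · -- IsValD
    exact ⟨trivial, trivial⟩
  · -- closed
    simp [fD, fvD, fvT, fvV, w1, w2, b1, b2, ttD, ffD]
  · -- norm 1
    rw [normD]
    have hdom : domD fD = {Term.val w1, Term.val w2} := by
      show {Term.val w1} ∪ {Term.val w2} = _
      ext x; simp
    have hne : (Term.val w1) ≠ (Term.val w2) := by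
      intro h; exact w1_ne_w2 (Term.val.inj h)
    have hne' : ¬ (Term.val w2 = Term.val w1) := fun h => hne h.symm
    have hc1 : coeff fD (.val w1) = cc := by
      simp [fD, coeff, hne']
    have hc2 : coeff fD (.val w2) = cc := by
      simp [fD, coeff, hne]
    rw [innerD, hdom, Finset.sum_pair hne, hc1, hc2]
    have : (starRingEnd ℂ) cc * cc + (starRingEnd ℂ) cc * cc = ((1:ℝ) : ℂ) := by
      rw [cc, Complex.conj_ofReal, ← Complex.ofReal_mul, ← Complex.ofReal_add]
      norm_cast
      have h2 : Real.sqrt 2 * Real.sqrt 2 = 2 := Real.mul_self_sqrt (by norm_num)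
      field_simp
      nlinarith [h2]
    rw [this]
    simp
  · -- all lam 2
    intro t ht
    have hdom : domD fD = {Term.val w1, Term.val w2} := by
      show {Term.val w1} ∪ {Term.val w2} = _
      ext x; simp
    rw [hdom] at ht
    simp only [Finset.mem_insert, Finset.mem_singleton] at ht
    rcases ht with rfl | rfl
    · exact ⟨b1, rfl⟩
    · exact ⟨b2, rfl⟩
  · -- realizer condition
    intro v hv
    obtain ⟨hspan, ⟨⟨hval, hcl⟩, hnorm⟩⟩ := hv
    have hstrip : stripLam 2 fD = Dstrip := by
      simp [fD, stripLam, Dstrip, w1, w2]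
    rw [hstrip]
    have hdomv := span_domD hspan
    obtain ⟨W, he, hd, hviv, hf, hc, hc', hs⟩ := pos_main v (fun t ht => by
      have := hdomv ht
      simpa using this)
    refine ⟨W, ⟨hs, ⟨⟨hviv, hf⟩, ?_⟩⟩, he⟩
    rw [normD_eq_one_iff hd, hc, hc', add_comm]
    exact (normD_eq_one_iff hdomv).mp hnorm
/-! ### Church numeral computations -/

def Jn (w : Val) : ℕ → Term
  | 0 => .val (.var 1)
  | k + 1 => .app (.val w) (Jn w k)

def Cn (w : Val) : ℕ → Term
  | 0 => ttT
  | k + 1 => .app (.val w) (Cn w k)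

lemma substT_iterApp (w : Val) : ∀ n, substT 0 w (iterApp n) = Jn w n
  | 0 => by simp [iterApp, Jn, substT, substV]
  | n + 1 => by simp [iterApp, Jn, substT, substV, substT_iterApp w n]

lemma substT_Jn (w : Val) (hw : substV 1 (.inl .star) w = w) :
    ∀ n, substT 1 (.inl .star) (Jn w n) = Cn w n
  | 0 => by simp [Jn, Cn, substT, substV]
  | n + 1 => by simp [Jn, Cn, substT, substV, hw, substT_Jn w hw n]

lemma w1_subst : substV 1 (.inl .star) w1 = w1 := by
  simp [w1, b1, substV, substD, substT, ttD]

lemma w2_subst : substV 1 (.inl .star) w2 = w2 := by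
  simp [w2, b2, substV, substD, substT, ffD]

lemma cone_Cn1 : ∀ k, Cone (Cn w1 k)
  | 0 => Cone.tt
  | k + 1 => Cone.app1 (cone_Cn1 k)

lemma cone_Cn2 : ∀ k, Cone (Cn w2 k)
  | 0 => Cone.tt
  | k + 1 => Cone.app2 (cone_Cn2 k)

lemma phi_Cn1 : ∀ k, phi (Cn w1 (k + 1)) = 0
  | 0 => by simp [Cn, phi, matOf_w1]
  | k + 1 => by
      have : phi (Cn w1 (k + 1 + 1)) = matOf w1 (phi (Cn w1 (k + 1))) := by simp [Cn, phi]
      rw [this, phi_Cn1 k, matOf_zero]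

lemma phi_Cn2 : ∀ k, phi (Cn w2 (k + 2)) = 0
  | 0 => by simp [Cn, phi, matOf_w2]
  | k + 1 => by
      have : phi (Cn w2 (k + 1 + 2)) = matOf w2 (phi (Cn w2 (k + 2))) := by simp [Cn, phi]
      rw [this, phi_Cn2 k, matOf_zero]

/-- n̄ applied (bilinearly) to fD. -/
noncomputable def Gd (n : ℕ) : Distr :=
  .add (.smul cc (.single (.val (.lam 1 (.single (Jn w1 n))))))
       (.smul cc (.single (.val (.lam 1 (.single (Jn w2 n))))))

lemma church_app_f (n : ℕ) :
    bsubst 0 (stripLam 0 (church n)) fD = Gd n := by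
  have h1 : stripLam 0 (church n) = .single (.val (.lam 1 (.single (iterApp n)))) := by
    simp [church, stripLam]
  rw [h1]
  show Distr.add (.smul cc (substD 0 w1 _)) (.smul cc (substD 0 w2 _)) = _
  simp [Gd, substD, substT, substV, substT_iterApp]
theorem church_not_unitary' (n : ℕ) (hn : n ≠ 1) :
    ¬ Realizes (uarrowT (uarrowT sharpBool sharpBool)
        (uarrowT sharpBool sharpBool)) (church n) := by
  rintro ⟨V, hVmem, hVev⟩
  have hVd : V = church n := by
    refine eval_eq_of_val_dom ?_ hVev
    intro t ht
    simp only [church, domD, Finset.mem_singleton] at ht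
    exact ⟨_, ht⟩
  subst hVd
  obtain ⟨hsph, x, hdomc, hrealc⟩ := hVmem
  obtain ⟨b, hb⟩ := hdomc (.val (.lam 0 (.single (.val (.lam 1 (.single (iterApp n)))))))
    (by simp [church, domD])
  have hx : x = 0 := by
    simp only [Term.val.injEq, Val.lam.injEq] at hb
    exact hb.1.symm
  subst hx
  have h2 := hrealc fD f_mem
  rw [church_app_f] at h2
  obtain ⟨V₂, hV₂mem, hV₂ev⟩ := h2
  have hV₂d : V₂ = Gd n := by
    refine eval_eq_of_val_dom ?_ hV₂ev
    intro t ht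
    simp only [Gd, domD, Finset.mem_union, Finset.mem_singleton] at ht
    rcases ht with h | h
    · exact ⟨_, h⟩
    · exact ⟨_, h⟩
  subst hV₂d
  cases n with
  | zero =>
      obtain ⟨⟨_, hnorm⟩, _⟩ := hV₂mem
      have hdom0 : domD (Gd 0) = {Term.val (.lam 1 (.single (.val (.var 1))))} := by
        show {Term.val (.lam 1 (.single (Jn w1 0)))} ∪ {Term.val (.lam 1 (.single (Jn w2 0)))} = _
        simp [Jn]
      have hcoeff : coeff (Gd 0) (Term.val (.lam 1 (.single (.val (.var 1))))) = cc + cc := by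
        simp [Gd, coeff, Jn]
      have hinner : innerD (Gd 0) (Gd 0) = ((2:ℝ) : ℂ) := by
        rw [innerD, hdom0, Finset.sum_singleton, hcoeff]
        rw [cc, ← Complex.ofReal_add, Complex.conj_ofReal, ← Complex.ofReal_mul]
        norm_cast
        have h2 : Real.sqrt 2 * Real.sqrt 2 = 2 := Real.mul_self_sqrt (by norm_num)
        field_simp
        nlinarith [h2]
      rw [normD, hinner] at hnorm
      simp only [Complex.ofReal_re] at hnorm
      have := Real.sqrt_eq_one.mp hnorm
      norm_num at this
  | succ m =>
    cases m with
    | zero => exact hn rfl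
    | succ m =>
        obtain ⟨hsph₂, x', hdom₂, hreal₂⟩ := hV₂mem
        obtain ⟨b', hb'⟩ := hdom₂ (.val (.lam 1 (.single (Jn w1 (m+2)))))
          (by simp [Gd, domD])
        have hx' : x' = 1 := by
          simp only [Term.val.injEq, Val.lam.injEq] at hb'
          exact hb'.1.symm
        subst hx'
        have h3 := hreal₂ ttD tt_mem_sharpBool
        have hcomp : bsubst 1 (stripLam 1 (Gd (m+2))) ttD =
            .add (.smul cc (.single (Cn w1 (m+2)))) (.smul cc (.single (Cn w2 (m+2)))) := by
          have h1 : stripLam 1 (Gd (m+2)) =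
              .add (.smul cc (.single (Jn w1 (m+2)))) (.smul cc (.single (Jn w2 (m+2)))) := by
            simp [Gd, stripLam]
          rw [h1]
          show Distr.add (.smul cc (substD 1 (.inl .star) _))
            (.smul cc (substD 1 (.inl .star) _)) = _
          simp [substD, substT_Jn w1 w1_subst, substT_Jn w2 w2_subst]
        rw [hcomp] at h3
        obtain ⟨V₃, ⟨hspan₃, ⟨⟨hval₃, hcl₃⟩, hnorm₃⟩⟩, hev₃⟩ := h3
        have hinv : Inv 0 V₃ := by
          refine eval_inv hev₃ ⟨?_, ?_⟩
          · intro t ht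
            simp only [domD, Finset.mem_union, Finset.mem_singleton] at ht
            rcases ht with rfl | rfl
            · exact cone_Cn1 _
            · exact cone_Cn2 _
          · show phiD _ = 0
            have e1 : phi (Cn w1 (m+2)) = 0 := phi_Cn1 (m+1)
            have e2 : phi (Cn w2 (m+2)) = 0 := phi_Cn2 m
            simp [phiD, e1, e2]
        have hdomv₃ := span_domD hspan₃
        have hphi := hinv.2
        rw [phiD_eq_coeff_of_pair hdomv₃] at hphi
        have hctt : coeff V₃ ttT = 0 := congrArg Prod.fst hphi
        have hcff : coeff V₃ ffT = 0 := congrArg Prod.snd hphi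
        have hone := (normD_eq_one_iff hdomv₃).mp hnorm₃
        rw [hctt, hcff] at hone
        simp at hone

/-- For every n ≠ 1, the Church numeral n̄ does not realize
(♯𝔹⇒♯𝔹)⇒(♯𝔹⇒♯𝔹). -/
theorem church_not_unitary (n : ℕ) (hn : n ≠ 1) :
    ¬ Realizes (uarrowT (uarrowT sharpBool sharpBool)
        (uarrowT sharpBool sharpBool)) (church n) := by
  exact church_not_unitary' n hn

end LinAlg
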